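/- For n ≥ 2, the number of rational knots with crossing number n, RK(n) = (1/3)(2^{n-2} + ((-1)^{n+1}+1)/2 · 2^{(n-1)/2} + ((-1)^{n+1}-1)/2 + 1 - (-1)^{⌊n/2⌋ n}), plus the number of oriented rational links with crossing number n, RL(n) = (1/3)(2^{n-2} + 2(-1)^n) + ((-1)^n+1)/2 · 2^{(n-2)/2}, equals Σ_{s=2}^{n} R(n,s) + Σ_{s=2}^{n} RS(n,s), the total count of R-decompositions (counting symmetric type III ones twice). -/

import Mathlib

open Finset

/-- The number `R(n,s)` of type I/III R-decompositions with `n` crossings and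
`s` Seifert circles, given by the explicit binomial sum. Note that in natural
number arithmetic `⌈(s-1)/2⌉ = s/2`, `⌊(s-1)/2⌋ = (s-1)/2`, `⌊(s+1)/2⌋ = (s+1)/2`,
and `((-1)^s+1)/2` is `1` if `s` is even and `0` otherwise. -/
def Rcount (n s : ℕ) : ℕ :=
  ∑ j ∈ Finset.Icc 1 (min (s / 2) (n / 2 - (s - 1) / 2)),
    Nat.choose (j + (s - 1) / 2 - 1) (2 * j - (if Even s then 1 else 0) - 1) *
      Nat.choose (n - j - (s + 1) / 2) (j + (s - 1) / 2 - 1)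

/-- The number `RS(n,s)` of symmetric type III R-decompositions with `n` crossings
and `s` Seifert circles; it is `0` for odd `s`, and for `s = 2k` it is given by the
explicit binomial sum, where the indicator `((-1)^{(j+k)n}+1)/2` is `1` exactly when
`(j+k)*n` is even. Note `⌈(j+k)/2⌉ = (j+k+1)/2` in natural number arithmetic. -/
def RScount (n s : ℕ) : ℕ :=
  if Even s then
    ∑ j ∈ Finset.Icc 1 (min (s / 2) (n / 2 + 1 - s / 2)),
      (if Even ((j + s / 2) * n) then 1 else 0) *
        (Nat.choose ((j + s / 2) / 2 - 1) (j - 1) *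
          Nat.choose (n / 2 - (j + s / 2 + 1) / 2) ((j + s / 2) / 2 - 1))
  else 0


lemma sum_Icc_one (f : ℕ → ℕ) (n : ℕ) : ∑ j ∈ Icc 1 n, f j = ∑ u ∈ range n, f (u+1) := by
  induction n with
  | zero => simp
  | succ k ih => rw [Finset.sum_Icc_succ_top (by omega), ih, Finset.sum_range_succ]

lemma sum_range_pair {M : Type*} [AddCommMonoid M] (g : ℕ → M) (K : ℕ) :
    ∑ i ∈ range (2*K), g i = ∑ u ∈ range K, (g (2*u) + g (2*u+1)) := by
  induction K with
  | zero => simp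
  | succ k ih =>
    rw [show 2*(k+1) = (2*k+1)+1 by ring, Finset.sum_range_succ, Finset.sum_range_succ,
      ih, Finset.sum_range_succ, add_assoc]

lemma sum_Icc_pair {M : Type*} [AddCommMonoid M] (g : ℕ → M) (K : ℕ) :
    ∑ t ∈ Icc 2 (2*K+1), g t = ∑ u ∈ Icc 1 K, (g (2*u) + g (2*u+1)) := by
  induction K with
  | zero => simp
  | succ k ih =>
    rw [show 2*(k+1)+1 = (2*k+1)+1+1 by ring, Finset.sum_Icc_succ_top (by omega),
      Finset.sum_Icc_succ_top (by omega), ih, Finset.sum_Icc_succ_top (by omega), add_assoc,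
      show 2*k+1+1 = 2*(k+1) by ring, show 2*(k+1)+1 = 2*(k+1)+1 by ring]

lemma sum_range_choose_ext (r m : ℕ) (h : r < m) : ∑ i ∈ range m, r.choose i = 2^r := by
  rw [← Nat.sum_range_choose r]
  symm
  apply Finset.sum_subset (Finset.range_subset_range.2 (by omega))
  intro x hx hx'
  simp only [Finset.mem_range] at hx hx'
  exact Nat.choose_eq_zero_of_lt (by omega)

lemma alt_sum_choose_ext (r m : ℕ) (h1 : 1 ≤ r) (h : r < m) :
    ∑ i ∈ range m, (-1:ℤ)^i * r.choose i = 0 := by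
  have := @Int.alternating_sum_range_choose r
  rw [if_neg (by omega)] at this
  rw [← this]
  symm
  apply Finset.sum_subset (Finset.range_subset_range.2 (by omega))
  intro x hx hx'
  simp only [Finset.mem_range] at hx hx'
  rw [Nat.choose_eq_zero_of_lt (by omega)]
  simp

lemma even_odd_choose_eq (r n : ℕ) (h1 : 1 ≤ r) (h2 : r < 2*n) :
    (∑ u ∈ range n, r.choose (2*u)) = ∑ u ∈ range n, r.choose (2*u+1) := by
  have h := alt_sum_choose_ext r (2*n) h1 h2
  rw [sum_range_pair (fun i => (-1:ℤ)^i * r.choose i) n] at h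
  have h' : ∑ u ∈ range n, ((r.choose (2*u) : ℤ) - r.choose (2*u+1)) = 0 := by
    rw [← h]
    apply Finset.sum_congr rfl
    intro u _
    have e1 : ((-1:ℤ))^(2*u) = 1 := by rw [pow_mul]; norm_num
    have e2 : ((-1:ℤ))^(2*u+1) = -1 := by rw [pow_add, e1]; norm_num
    rw [e1, e2]; ring
  rw [Finset.sum_sub_distrib, sub_eq_zero] at h'
  exact_mod_cast h'

lemma pow_two_pred (r : ℕ) (h : 1 ≤ r) : (2:ℕ)^r = 2 * 2^(r-1) := by
  obtain ⟨r', rfl⟩ : ∃ r', r = r'+1 := ⟨r-1, by omega⟩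
  simp [pow_succ]
  ring

lemma row_odd (r n : ℕ) (h1 : 1 ≤ r) (h2 : r < 2*n) :
    ∑ j ∈ Icc 1 n, r.choose (2*j-1) = 2^(r-1) := by
  have key : ∑ j ∈ Icc 1 n, r.choose (2*j-1) = ∑ u ∈ range n, r.choose (2*u+1) := by
    rw [sum_Icc_one]
    exact Finset.sum_congr rfl (fun u _ => by congr 1 <;> try omega)
  have htot : (∑ u ∈ range n, r.choose (2*u)) + (∑ u ∈ range n, r.choose (2*u+1)) = 2^r := by
    rw [← Finset.sum_add_distrib, ← sum_range_pair (fun i => r.choose i) n,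
      sum_range_choose_ext r (2*n) h2]
  have halt := even_odd_choose_eq r n h1 h2
  have h2r := pow_two_pred r h1
  rw [key]; omega

lemma row_even (r n : ℕ) (h1 : 1 ≤ r) (h2 : r < 2*n) :
    ∑ j ∈ Icc 1 n, r.choose (2*j-2) = 2^(r-1) := by
  have key : ∑ j ∈ Icc 1 n, r.choose (2*j-2) = ∑ u ∈ range n, r.choose (2*u) := by
    rw [sum_Icc_one]
    exact Finset.sum_congr rfl (fun u _ => by congr 1 <;> try omega)
  have htot : (∑ u ∈ range n, r.choose (2*u)) + (∑ u ∈ range n, r.choose (2*u+1)) = 2^r := by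
    rw [← Finset.sum_add_distrib, ← sum_range_pair (fun i => r.choose i) n,
      sum_range_choose_ext r (2*n) h2]
  have halt := even_odd_choose_eq r n h1 h2
  have h2r := pow_two_pred r h1
  rw [key]; omega

lemma row_even_zero (n : ℕ) (hn : 1 ≤ n) :
    ∑ j ∈ Icc 1 n, Nat.choose 0 (2*j-2) = 1 := by
  rw [Finset.sum_eq_single_of_mem 1 (by simp; omega)]
  · norm_num
  · intro j hj hj1
    simp only [Finset.mem_Icc] at hj
    exact Nat.choose_eq_zero_of_lt (by omega)

lemma row_b (r n : ℕ) (h : r < n) : ∑ j ∈ Icc 1 n, r.choose (j-1) = 2^r := by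
  rw [sum_Icc_one]
  rw [show (∑ u ∈ range n, r.choose (u+1-1)) = ∑ u ∈ range n, r.choose u from
    Finset.sum_congr rfl (fun u _ => by congr 1)]
  exact sum_range_choose_ext r n h

lemma shift_sum (F : ℕ → ℕ) (j n : ℕ) (hj : 1 ≤ j) (hjn : j ≤ n)
    (h0 : ∀ t, 2 ≤ t → t ≤ j → F (t - j) = 0) (h1 : ∀ t, n < t → F (t - j) = 0) :
    ∑ m ∈ Icc 1 n, F m = ∑ t ∈ Icc (1+j) (n+j), F (t - j) := by
  rw [← Finset.map_add_right_Icc, Finset.sum_map]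
  apply Finset.sum_congr rfl
  intro m _
  congr 1
  simp [addRightEmbedding]

lemma shift_sum' (F : ℕ → ℕ) (j n : ℕ) (hj : 1 ≤ j) (hjn : j ≤ n)
    (h0 : ∀ t, 2 ≤ t → t ≤ j → F (t - j) = 0) (h1 : ∀ t, n < t → F (t - j) = 0) :
    ∑ m ∈ Icc 1 n, F m = ∑ t ∈ Icc 2 n, F (t - j) := by
  rw [shift_sum F j n hj hjn h0 h1]
  have e2 : ∑ t ∈ Icc (1+j) (n+j), F (t-j) = ∑ t ∈ Icc 2 (n+n), F (t-j) := by
    apply Finset.sum_subset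
    · intro t ht; simp only [Finset.mem_Icc] at *; omega
    · intro t ht ht'
      simp only [Finset.mem_Icc] at ht ht'
      rcases (by omega : t ≤ j ∨ n < t) with h | h
      · exact h0 t (by omega) h
      · exact h1 t h
  have e3 : ∑ t ∈ Icc 2 n, F (t-j) = ∑ t ∈ Icc 2 (n+n), F (t-j) := by
    apply Finset.sum_subset
    · intro t ht; simp only [Finset.mem_Icc] at *; omega
    · intro t ht ht'
      simp only [Finset.mem_Icc] at ht ht'
      exact h1 t (by omega)
  rw [e2, ← e3]

def Xs (M : ℕ) : ℕ := ∑ u ∈ Icc 1 M, 2^(u-1) * Nat.choose (M - u) (u-1)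

lemma Xs_split (M : ℕ) :
    Xs (M+1) = 1 + 2 * ∑ u ∈ Icc 2 (M+1), 2^(u-2) * Nat.choose (M+1-u) (u-1) := by
  unfold Xs
  have h : Icc 1 (M+1) = insert 1 (Icc 2 (M+1)) := by ext x; simp; omega
  rw [h, Finset.sum_insert (by simp)]
  simp only [Finset.mul_sum]
  congr 1
  · simp
  · apply Finset.sum_congr rfl
    intro u hu
    simp only [Finset.mem_Icc] at hu
    rw [show 2^(u-1) = 2 * 2^(u-2) by
      obtain ⟨v, rfl⟩ : ∃ v, u = v + 2 := ⟨u-2, by omega⟩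
      simp [pow_succ]; ring]
    ring

lemma Xs_rec (M : ℕ) : Xs (M+2) = Xs (M+1) + 2 * Xs M := by
  have step1 : Xs (M+2) = ∑ u ∈ Icc 1 (M+1), 2^(u-1) * Nat.choose (M+2-u) (u-1) := by
    unfold Xs
    rw [Finset.sum_Icc_succ_top (by omega)]
    simp only [show M+2-(M+2) = 0 by omega]
    rw [Nat.choose_eq_zero_of_lt (by omega)]
    simp
  rw [step1]
  have h : Icc 1 (M+1) = insert 1 (Icc 2 (M+1)) := by ext x; simp; omega
  rw [h, Finset.sum_insert (by simp)]
  have pascal : ∀ u ∈ Icc 2 (M+1), 2^(u-1) * Nat.choose (M+2-u) (u-1)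
      = 2^(u-1) * Nat.choose (M+1-u) (u-2) + 2^(u-1) * Nat.choose (M+1-u) (u-1) := by
    intro u hu
    simp only [Finset.mem_Icc] at hu
    rw [show M+2-u = (M+1-u)+1 by omega, show u-1 = (u-2)+1 by omega,
      Nat.choose_succ_succ, Nat.mul_add, Nat.succ_eq_add_one, show (u-2)+1 = u-1 by omega]
  rw [Finset.sum_congr rfl pascal, Finset.sum_add_distrib]
  have e2 : (1:ℕ) + ∑ u ∈ Icc 2 (M+1), 2^(u-1) * Nat.choose (M+1-u) (u-1) = Xs (M+1) := by
    unfold Xs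
    rw [h, Finset.sum_insert (by simp)]
    simp
  have e3 : ∑ u ∈ Icc 2 (M+1), 2^(u-1) * Nat.choose (M+1-u) (u-2) = 2 * Xs M := by
    unfold Xs
    rw [Finset.mul_sum]
    rw [show Icc 2 (M+1) = Finset.map (addRightEmbedding 1) (Icc 1 M) by
      rw [Finset.map_add_right_Icc]]
    rw [Finset.sum_map]
    apply Finset.sum_congr rfl
    intro v hv
    simp only [Finset.mem_Icc] at hv
    simp only [addRightEmbedding_apply]
    rw [show v+1-1 = v by omega, show v+1-2 = v-1 by omega, show M+1-(v+1) = M - v by omega,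
      show 2^v = 2 * 2^(v-1) by
        obtain ⟨w, rfl⟩ : ∃ w, v = w + 1 := ⟨v-1, by omega⟩
        simp [pow_succ]; ring]
    ring
  simp only [Nat.sub_self, pow_zero, one_mul, Nat.add_sub_cancel, Nat.choose_zero_right]
  omega

lemma Xs_closed (M : ℕ) : 3 * Xs M + 2 = 2^M + (if Even M then 1 else 3) := by
  induction M using Nat.strong_induction_on with
  | _ M ih =>
    match M with
    | 0 => simp [Xs]
    | 1 => norm_num [Xs]
    | (M+2) =>
      have h1 := ih (M+1) (by omega)
      have h2 := ih M (by omega)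
      have he2 : Even (M+2) ↔ Even M := by simp [Nat.even_add]
      have he1 : Even (M+1) ↔ ¬ Even M := by simp [Nat.even_add_one]
      have hpar : (if Even (M+2) then (1:ℕ) else 3) = if Even M then 1 else 3 := by
        by_cases h : Even M
        · rw [if_pos h, if_pos (he2.2 h)]
        · rw [if_neg h, if_neg (fun c => h (he2.1 c))]
      have hpar2 : (if Even (M+1) then (1:ℕ) else 3) = if Even M then 3 else 1 := by
        by_cases h : Even M
        · rw [if_pos h, if_neg (fun c => (he1.1 c) h)]
        · rw [if_neg h, if_pos (he1.2 h)]
      rw [Xs_rec, hpar]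
      rw [hpar2] at h1
      have hp1 : (2:ℕ)^(M+1) = 2 * 2^M := by rw [pow_succ]; ring
      have hp2 : (2:ℕ)^(M+2) = 4 * 2^M := by rw [pow_succ, pow_succ]; ring
      by_cases h : Even M
      · rw [if_pos h] at h1 h2 ⊢
        omega
      · rw [if_neg h] at h1 h2 ⊢
        omega


lemma Rcount_zero_of_gt (n s : ℕ) (h : n < s) : Rcount n s = 0 := by
  unfold Rcount
  rw [show n / 2 - (s - 1) / 2 = 0 by omega]
  simp

lemma Rcount_one (n : ℕ) : Rcount n 1 = 0 := by
  unfold Rcount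
  norm_num

lemma Rcount_zero (n : ℕ) : Rcount n 0 = 0 := by
  unfold Rcount
  norm_num

lemma Rcount_even (n m : ℕ) (hm : 1 ≤ m) (hn : 2 ≤ n) :
    Rcount n (2*m) = ∑ j ∈ Icc 1 n,
      Nat.choose (j+m-2) (2*j-2) * Nat.choose (n - (j+m)) (j+m-2) := by
  unfold Rcount
  have he : (if Even (2*m) then 1 else 0) = 1 := if_pos ⟨m, by ring⟩
  have d1 : (2*m)/2 = m := by omega
  have d2 : (2*m-1)/2 = m-1 := by omega
  have d3 : (2*m+1)/2 = m := by omega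
  simp only [he, d1, d2, d3]
  have step1 : ∀ j ∈ Icc 1 (min m (n/2 - (m-1))),
      Nat.choose (j+(m-1)-1) (2*j-1-1) * Nat.choose (n-j-m) (j+(m-1)-1)
      = Nat.choose (j+m-2) (2*j-2) * Nat.choose (n-(j+m)) (j+m-2) := by
    intro j hj
    simp only [Finset.mem_Icc] at hj
    rw [show j+(m-1)-1 = j+m-2 by omega, show 2*j-1-1 = 2*j-2 by omega,
      show n-j-m = n-(j+m) by omega]
  rw [Finset.sum_congr rfl step1]
  apply Finset.sum_subset
  · intro j hj; simp only [Finset.mem_Icc] at *; omega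
  · intro j hj hj'
    simp only [Finset.mem_Icc, lt_min_iff, not_and, not_le] at hj hj'
    rcases (by omega : m < j ∨ (j ≤ m ∧ n/2 - (m-1) < j)) with h | ⟨h1, h2⟩
    · have hz : (j+m-2).choose (2*j-2) = 0 := Nat.choose_eq_zero_of_lt (by omega)
      rw [hz, zero_mul]
    · have hz : (n - (j+m)).choose (j+m-2) = 0 := Nat.choose_eq_zero_of_lt (by omega)
      rw [hz, mul_zero]

lemma Rcount_odd (n m : ℕ) (hm : 1 ≤ m) (hn : 2 ≤ n) :
    Rcount n (2*m+1) = ∑ j ∈ Icc 1 n,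
      Nat.choose (j+m-1) (2*j-1) * Nat.choose (n - 1 - (j+m)) (j+m-1) := by
  unfold Rcount
  have he : (if Even (2*m+1) then 1 else 0) = 0 := if_neg (by simp [Nat.even_add_one, parity_simps])
  have d1 : (2*m+1)/2 = m := by omega
  have d2 : (2*m+1-1)/2 = m := by omega
  have d3 : (2*m+1+1)/2 = m+1 := by omega
  simp only [he, d1, d2, d3]
  have step1 : ∀ j ∈ Icc 1 (min m (n/2 - m)),
      Nat.choose (j+m-1) (2*j-0-1) * Nat.choose (n-j-(m+1)) (j+m-1)
      = Nat.choose (j+m-1) (2*j-1) * Nat.choose (n-1-(j+m)) (j+m-1) := by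
    intro j hj
    simp only [Finset.mem_Icc] at hj
    rw [show 2*j-0-1 = 2*j-1 by omega, show n-j-(m+1) = n-1-(j+m) by omega]
  rw [Finset.sum_congr rfl step1]
  apply Finset.sum_subset
  · intro j hj; simp only [Finset.mem_Icc] at *; omega
  · intro j hj hj'
    simp only [Finset.mem_Icc, lt_min_iff, not_and, not_le] at hj hj'
    rcases (by omega : m < j ∨ (j ≤ m ∧ n/2 - m < j)) with h | ⟨h1, h2⟩
    · have hz : (j+m-1).choose (2*j-1) = 0 := Nat.choose_eq_zero_of_lt (by omega)
      rw [hz, zero_mul]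
    · have hz : (n - 1 - (j+m)).choose (j+m-1) = 0 := Nat.choose_eq_zero_of_lt (by omega)
      rw [hz, mul_zero]

lemma A_split (n : ℕ) (hn : 2 ≤ n) :
    ∑ s ∈ Icc 2 n, Rcount n s = ∑ m ∈ Icc 1 n, (Rcount n (2*m) + Rcount n (2*m+1)) := by
  have e1 : ∑ s ∈ Icc 2 n, Rcount n s = ∑ s ∈ range (2*(n+1)), Rcount n s := by
    apply Finset.sum_subset
    · intro s hs; simp only [Finset.mem_Icc, Finset.mem_range] at *; omega
    · intro s hs hs'
      simp only [Finset.mem_Icc, Finset.mem_range, not_and, not_le] at hs hs'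
      rcases (by omega : s = 0 ∨ s = 1 ∨ n < s) with rfl | rfl | h
      · exact Rcount_zero n
      · exact Rcount_one n
      · exact Rcount_zero_of_gt n s h
  rw [e1, sum_range_pair (fun s => Rcount n s) (n+1), Finset.sum_range_succ']
  rw [sum_Icc_one (fun m => Rcount n (2*m) + Rcount n (2*m+1)) n]
  rw [show (Rcount n (2*0) + Rcount n (2*0+1)) = 0 by norm_num [Rcount_zero, Rcount_one],
    add_zero]

lemma drop_top (f : ℕ → ℕ) (a n : ℕ) (h : a ≤ n) (h1 : 1 ≤ n) (hz : f n = 0) :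
    ∑ t ∈ Icc a n, f t = ∑ t ∈ Icc a (n-1), f t := by
  obtain ⟨n', rfl⟩ : ∃ n', n = n' + 1 := ⟨n-1, by omega⟩
  rcases Nat.lt_or_ge n' a with hc | hc
  · have ha : a = n' + 1 := by omega
    subst ha
    rw [Finset.Icc_self, Finset.sum_singleton, hz, Finset.Icc_eq_empty (by omega),
      Finset.sum_empty]
  · rw [Finset.sum_Icc_succ_top (by omega), hz, add_zero, Nat.add_sub_cancel]

lemma A_eq (n : ℕ) (hn : 4 ≤ n) :
    ∑ s ∈ Icc 2 n, Rcount n s = Xs (n-1) := by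
  rw [A_split n (by omega)]
  have conv1 : ∀ m ∈ Icc 1 n, Rcount n (2*m) + Rcount n (2*m+1) =
      (∑ j ∈ Icc 1 n, Nat.choose (j+m-2) (2*j-2) * Nat.choose (n - (j+m)) (j+m-2)) +
      (∑ j ∈ Icc 1 n, Nat.choose (j+m-1) (2*j-1) * Nat.choose (n - 1 - (j+m)) (j+m-1)) := by
    intro m hm
    simp only [Finset.mem_Icc] at hm
    rw [Rcount_even n m (by omega) (by omega), Rcount_odd n m (by omega) (by omega)]
  rw [Finset.sum_congr rfl conv1, Finset.sum_add_distrib]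
  -- Even piece
  have evenpiece : ∑ m ∈ Icc 1 n, ∑ j ∈ Icc 1 n,
      Nat.choose (j+m-2) (2*j-2) * Nat.choose (n - (j+m)) (j+m-2)
      = ∑ t ∈ Icc 2 n, (∑ j ∈ Icc 1 n, Nat.choose (t-2) (2*j-2)) * Nat.choose (n-t) (t-2) := by
    rw [Finset.sum_comm]
    have shift : ∀ j ∈ Icc 1 n,
        ∑ m ∈ Icc 1 n, Nat.choose (j+m-2) (2*j-2) * Nat.choose (n - (j+m)) (j+m-2)
        = ∑ t ∈ Icc 2 n, Nat.choose (t-2) (2*j-2) * Nat.choose (n-t) (t-2) := by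
      intro j hj
      simp only [Finset.mem_Icc] at hj
      rw [shift_sum' (fun m => Nat.choose (j+m-2) (2*j-2) * Nat.choose (n - (j+m)) (j+m-2))
        j n hj.1 hj.2]
      · apply Finset.sum_congr rfl
        intro t ht
        simp only [Finset.mem_Icc] at ht
        rcases Nat.lt_or_ge j t with hc | hc
        · rw [show j + (t-j) - 2 = t - 2 by omega, show n - (j + (t-j)) = n - t by omega]
        · have z1 : (j+(t-j)-2).choose (2*j-2) = 0 := Nat.choose_eq_zero_of_lt (by omega)
          have z2 : (t-2).choose (2*j-2) = 0 := Nat.choose_eq_zero_of_lt (by omega)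
          rw [z1, z2, zero_mul, zero_mul]
      · intro t h2 htj
        have : (j+(t-j)-2).choose (2*j-2) = 0 := Nat.choose_eq_zero_of_lt (by omega)
        rw [this, zero_mul]
      · intro t hnt
        have : (n - (j+(t-j))).choose (j+(t-j)-2) = 0 := Nat.choose_eq_zero_of_lt (by omega)
        rw [this, mul_zero]
    rw [Finset.sum_congr rfl shift, Finset.sum_comm]
    apply Finset.sum_congr rfl
    intro t _
    rw [Finset.sum_mul]
  -- Odd piece
  have oddpiece : ∑ m ∈ Icc 1 n, ∑ j ∈ Icc 1 n,
      Nat.choose (j+m-1) (2*j-1) * Nat.choose (n - 1 - (j+m)) (j+m-1)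
      = ∑ t ∈ Icc 2 n, (∑ j ∈ Icc 1 n, Nat.choose (t-1) (2*j-1)) * Nat.choose (n-1-t) (t-1) := by
    rw [Finset.sum_comm]
    have shift : ∀ j ∈ Icc 1 n,
        ∑ m ∈ Icc 1 n, Nat.choose (j+m-1) (2*j-1) * Nat.choose (n - 1 - (j+m)) (j+m-1)
        = ∑ t ∈ Icc 2 n, Nat.choose (t-1) (2*j-1) * Nat.choose (n-1-t) (t-1) := by
      intro j hj
      simp only [Finset.mem_Icc] at hj
      rw [shift_sum' (fun m => Nat.choose (j+m-1) (2*j-1) * Nat.choose (n - 1 - (j+m)) (j+m-1))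
        j n hj.1 hj.2]
      · apply Finset.sum_congr rfl
        intro t ht
        simp only [Finset.mem_Icc] at ht
        rcases Nat.lt_or_ge j t with hc | hc
        · rw [show j + (t-j) - 1 = t - 1 by omega, show n - 1 - (j + (t-j)) = n - 1 - t by omega]
        · have z1 : (j+(t-j)-1).choose (2*j-1) = 0 := Nat.choose_eq_zero_of_lt (by omega)
          have z2 : (t-1).choose (2*j-1) = 0 := Nat.choose_eq_zero_of_lt (by omega)
          rw [z1, z2, zero_mul, zero_mul]
      · intro t h2 htj
        have : (j+(t-j)-1).choose (2*j-1) = 0 := Nat.choose_eq_zero_of_lt (by omega)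
        rw [this, zero_mul]
      · intro t hnt
        have : (n - 1 - (j+(t-j))).choose (j+(t-j)-1) = 0 := Nat.choose_eq_zero_of_lt (by omega)
        rw [this, mul_zero]
    rw [Finset.sum_congr rfl shift, Finset.sum_comm]
    apply Finset.sum_congr rfl
    intro t _
    rw [Finset.sum_mul]
  rw [evenpiece, oddpiece]
  -- apply row sums
  have rowO : ∀ t ∈ Icc 2 n, (∑ j ∈ Icc 1 n, Nat.choose (t-1) (2*j-1)) * Nat.choose (n-1-t) (t-1)
      = 2^(t-2) * Nat.choose (n-1-t) (t-1) := by
    intro t ht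
    simp only [Finset.mem_Icc] at ht
    rw [row_odd (t-1) n (by omega) (by omega), show t-1-1 = t-2 by omega]
  rw [Finset.sum_congr rfl rowO]
  -- split even piece at t = 2
  have hins : Icc 2 n = insert 2 (Icc 3 n) := by ext x; simp; omega
  rw [show (∑ t ∈ Icc 2 n, (∑ j ∈ Icc 1 n, Nat.choose (t-2) (2*j-2)) * Nat.choose (n-t) (t-2))
      = 1 + ∑ t ∈ Icc 3 n, 2^(t-3) * Nat.choose (n-t) (t-2) by
    rw [hins, Finset.sum_insert (by simp)]
    congr 1
    · norm_num
      rw [row_even_zero n (by omega)]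
    · apply Finset.sum_congr rfl
      intro t ht
      simp only [Finset.mem_Icc] at ht
      rw [row_even (t-2) n (by omega) (by omega), show t-2-1 = t-3 by omega]]
  -- reindex Icc 3 n to Icc 2 (n-1)
  have reidx : ∑ t ∈ Icc 3 n, 2^(t-3) * Nat.choose (n-t) (t-2)
      = ∑ u ∈ Icc 2 (n-1), 2^(u-2) * Nat.choose (n-1-u) (u-1) := by
    rw [show Icc 3 n = Finset.map (addRightEmbedding 1) (Icc 2 (n-1)) by
      rw [Finset.map_add_right_Icc]; congr 1 <;> omega]
    rw [Finset.sum_map]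
    apply Finset.sum_congr rfl
    intro u hu
    simp only [Finset.mem_Icc] at hu
    simp only [addRightEmbedding_apply]
    rw [show u+1-3 = u-2 by omega, show n-(u+1) = n-1-u by omega, show u+1-2 = u-1 by omega]
  rw [reidx]
  -- drop top of odd piece
  have dropO : ∑ t ∈ Icc 2 n, 2^(t-2) * Nat.choose (n-1-t) (t-1)
      = ∑ t ∈ Icc 2 (n-1), 2^(t-2) * Nat.choose (n-1-t) (t-1) := by
    apply drop_top _ 2 n (by omega) (by omega)
    have : (n-1-n).choose (n-1) = 0 := Nat.choose_eq_zero_of_lt (by omega)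
    rw [this, mul_zero]
  rw [dropO]
  -- conclude with Xs_split
  have xsp := Xs_split (n-2)
  rw [show n-2+1 = n-1 by omega] at xsp
  omega


lemma RScount_odd_s (n s : ℕ) (h : ¬ Even s) : RScount n s = 0 := by
  unfold RScount; rw [if_neg h]

lemma RScount_zero (n : ℕ) : RScount n 0 = 0 := by
  unfold RScount; norm_num

lemma RScount_zero_of_gt (n s : ℕ) (h : n < s) : RScount n s = 0 := by
  unfold RScount
  by_cases hs : Even s
  · rw [if_pos hs]
    have h2 : s % 2 = 0 := Nat.even_iff.1 hs
    rw [show n / 2 + 1 - s / 2 = 0 by omega]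
    simp
  · rw [if_neg hs]

lemma RScount_even_k (n k : ℕ) (hk : 1 ≤ k) (hn : 4 ≤ n) :
    RScount n (2*k) = ∑ j ∈ Icc 1 n,
      (if Even ((j+k)*n) then 1 else 0) *
        (Nat.choose ((j+k)/2 - 1) (j-1) * Nat.choose (n/2 - (j+k+1)/2) ((j+k)/2 - 1)) := by
  unfold RScount
  rw [if_pos ⟨k, by ring⟩]
  have d1 : (2*k)/2 = k := by omega
  simp only [d1]
  apply Finset.sum_subset
  · intro j hj; simp only [Finset.mem_Icc] at *; omega
  · intro j hj hj'
    simp only [Finset.mem_Icc, lt_min_iff, not_and, not_le] at hj hj'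
    rcases (by omega : k < j ∨ (j ≤ k ∧ n/2 + 1 - k < j)) with h | ⟨h1, h2⟩
    · have hz : ((j+k)/2 - 1).choose (j-1) = 0 := Nat.choose_eq_zero_of_lt (by omega)
      rw [hz, zero_mul, mul_zero]
    · have hz : (n/2 - (j+k+1)/2).choose ((j+k)/2 - 1) = 0 :=
        Nat.choose_eq_zero_of_lt (by omega)
      rw [hz, mul_zero, mul_zero]

lemma B_split (n : ℕ) (hn : 2 ≤ n) :
    ∑ s ∈ Icc 2 n, RScount n s = ∑ k ∈ Icc 1 n, RScount n (2*k) := by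
  have e1 : ∑ s ∈ Icc 2 n, RScount n s = ∑ s ∈ range (2*(n+1)), RScount n s := by
    apply Finset.sum_subset
    · intro s hs; simp only [Finset.mem_Icc, Finset.mem_range] at *; omega
    · intro s hs hs'
      simp only [Finset.mem_Icc, Finset.mem_range, not_and, not_le] at hs hs'
      rcases (by omega : s = 0 ∨ s = 1 ∨ n < s) with rfl | rfl | h
      · exact RScount_zero n
      · exact RScount_odd_s n 1 (by simp)
      · exact RScount_zero_of_gt n s h
  rw [e1, sum_range_pair (fun s => RScount n s) (n+1), Finset.sum_range_succ']
  rw [sum_Icc_one (fun k => RScount n (2*k)) n]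
  rw [show (RScount n (2*0) + RScount n (2*0+1)) = 0 by
    norm_num [RScount_zero, RScount_odd_s]]
  rw [add_zero]
  apply Finset.sum_congr rfl
  intro u _
  rw [RScount_odd_s n (2*(u+1)+1) (by simp [Nat.even_add_one, parity_simps]), add_zero]

lemma B_eq (n : ℕ) (hn : 4 ≤ n) :
    ∑ s ∈ Icc 2 n, RScount n s
    = ∑ t ∈ Icc 2 n, (if Even (t*n) then 1 else 0) *
        (2^(t/2-1) * Nat.choose (n/2-(t+1)/2) (t/2-1)) := by
  rw [B_split n (by omega)]
  have conv1 : ∀ k ∈ Icc 1 n, RScount n (2*k) = ∑ j ∈ Icc 1 n,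
      (if Even ((j+k)*n) then 1 else 0) *
        (Nat.choose ((j+k)/2 - 1) (j-1) * Nat.choose (n/2 - (j+k+1)/2) ((j+k)/2 - 1)) := by
    intro k hk
    simp only [Finset.mem_Icc] at hk
    exact RScount_even_k n k hk.1 hn
  rw [Finset.sum_congr rfl conv1, Finset.sum_comm]
  have shift : ∀ j ∈ Icc 1 n,
      (∑ k ∈ Icc 1 n, (if Even ((j+k)*n) then 1 else 0) *
        (Nat.choose ((j+k)/2 - 1) (j-1) * Nat.choose (n/2 - (j+k+1)/2) ((j+k)/2 - 1)))
      = ∑ t ∈ Icc 2 n, (if Even (t*n) then 1 else 0) *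
        (Nat.choose (t/2 - 1) (j-1) * Nat.choose (n/2 - (t+1)/2) (t/2 - 1)) := by
    intro j hj
    simp only [Finset.mem_Icc] at hj
    rw [shift_sum' (fun k => (if Even ((j+k)*n) then 1 else 0) *
        (Nat.choose ((j+k)/2 - 1) (j-1) * Nat.choose (n/2 - (j+k+1)/2) ((j+k)/2 - 1)))
      j n hj.1 hj.2]
    · apply Finset.sum_congr rfl
      intro t ht
      simp only [Finset.mem_Icc] at ht
      rcases Nat.lt_or_ge j t with hc | hc
      · rw [show j + (t-j) = t by omega]
      · have z1 : ((j+(t-j))/2 - 1).choose (j-1) = 0 := Nat.choose_eq_zero_of_lt (by omega)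
        have z2 : (t/2 - 1).choose (j-1) = 0 := Nat.choose_eq_zero_of_lt (by omega)
        rw [z1, z2, zero_mul, zero_mul, mul_zero, mul_zero]
    · intro t h2 htj
      have : ((j+(t-j))/2 - 1).choose (j-1) = 0 := Nat.choose_eq_zero_of_lt (by omega)
      rw [this, zero_mul, mul_zero]
    · intro t hnt
      have : (n/2 - (j+(t-j)+1)/2).choose ((j+(t-j))/2 - 1) = 0 :=
        Nat.choose_eq_zero_of_lt (by omega)
      rw [this, mul_zero, mul_zero]
  rw [Finset.sum_congr rfl shift, Finset.sum_comm]
  apply Finset.sum_congr rfl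
  intro t ht
  simp only [Finset.mem_Icc] at ht
  rw [← Finset.mul_sum, ← Finset.sum_mul, row_b (t/2-1) n (by omega)]

lemma B_even (n : ℕ) (hn : 4 ≤ n) (he : Even n) :
    ∑ s ∈ Icc 2 n, RScount n s = Xs (n/2) + Xs (n/2 - 1) := by
  rw [B_eq n hn]
  have hind : ∀ t ∈ Icc 2 n, (if Even (t*n) then (1:ℕ) else 0) *
        (2^(t/2-1) * Nat.choose (n/2-(t+1)/2) (t/2-1))
      = 2^(t/2-1) * Nat.choose (n/2-(t+1)/2) (t/2-1) := by
    intro t _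
    rw [if_pos (Nat.even_mul.2 (Or.inr he)), one_mul]
  rw [Finset.sum_congr rfl hind]
  have hn2 : n % 2 = 0 := Nat.even_iff.1 he
  have ext : ∑ t ∈ Icc 2 n, 2^(t/2-1) * Nat.choose (n/2-(t+1)/2) (t/2-1)
      = ∑ t ∈ Icc 2 (2*(n/2)+1), 2^(t/2-1) * Nat.choose (n/2-(t+1)/2) (t/2-1) := by
    rw [show 2*(n/2)+1 = n+1 by omega, Finset.sum_Icc_succ_top (by omega)]
    have hz : (n/2-(n+1+1)/2).choose ((n+1)/2-1) = 0 := Nat.choose_eq_zero_of_lt (by omega)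
    rw [hz, mul_zero, add_zero]
  rw [ext, sum_Icc_pair (fun t => 2^(t/2-1) * Nat.choose (n/2-(t+1)/2) (t/2-1)) (n/2)]
  have congr1 : ∀ u ∈ Icc 1 (n/2),
      (2^((2*u)/2-1) * Nat.choose (n/2-(2*u+1)/2) ((2*u)/2-1)
        + 2^((2*u+1)/2-1) * Nat.choose (n/2-(2*u+1+1)/2) ((2*u+1)/2-1))
      = 2^(u-1) * Nat.choose (n/2 - u) (u-1) + 2^(u-1) * Nat.choose (n/2-1-u) (u-1) := by
    intro u hu
    simp only [Finset.mem_Icc] at hu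
    rw [show (2*u)/2 = u by omega, show (2*u+1)/2 = u by omega,
      show (2*u+1+1)/2 = u+1 by omega, show n/2-(u+1) = n/2-1-u by omega]
  rw [Finset.sum_congr rfl congr1, Finset.sum_add_distrib]
  have e1 : ∑ u ∈ Icc 1 (n/2), 2^(u-1) * Nat.choose (n/2 - u) (u-1) = Xs (n/2) := rfl
  have e2 : ∑ u ∈ Icc 1 (n/2), 2^(u-1) * Nat.choose (n/2-1-u) (u-1) = Xs (n/2 - 1) := by
    rw [drop_top (fun u => 2^(u-1) * Nat.choose (n/2-1-u) (u-1)) 1 (n/2) (by omega) (by omega)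
      (by
        have hz : (n/2-1-(n/2)).choose (n/2-1) = 0 := Nat.choose_eq_zero_of_lt (by omega)
        simp only [hz, mul_zero])]
    rfl
  rw [e1, e2]

lemma B_odd (n : ℕ) (hn : 4 ≤ n) (ho : ¬ Even n) :
    ∑ s ∈ Icc 2 n, RScount n s = Xs (n/2) := by
  rw [B_eq n hn]
  have hn2 : n % 2 = 1 := by
    rcases Nat.even_or_odd n with h | h
    · exact absurd h ho
    · exact Nat.odd_iff.1 h
  rw [show Icc 2 n = Icc 2 (2*(n/2)+1) by rw [show 2*(n/2)+1 = n by omega]]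
  rw [sum_Icc_pair (fun t => (if Even (t*n) then (1:ℕ) else 0) *
    (2^(t/2-1) * Nat.choose (n/2-(t+1)/2) (t/2-1))) (n/2)]
  have congr1 : ∀ u ∈ Icc 1 (n/2),
      ((if Even ((2*u)*n) then (1:ℕ) else 0) *
          (2^((2*u)/2-1) * Nat.choose (n/2-(2*u+1)/2) ((2*u)/2-1))
        + (if Even ((2*u+1)*n) then (1:ℕ) else 0) *
          (2^((2*u+1)/2-1) * Nat.choose (n/2-(2*u+1+1)/2) ((2*u+1)/2-1)))
      = 2^(u-1) * Nat.choose (n/2 - u) (u-1) := by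
    intro u hu
    simp only [Finset.mem_Icc] at hu
    have i1 : Even ((2*u)*n) := by
      apply Nat.even_mul.2
      exact Or.inl ⟨u, by ring⟩
    have i2 : ¬ Even ((2*u+1)*n) := by
      rw [Nat.even_mul]
      push_neg
      constructor
      · simp [Nat.even_add_one, parity_simps]
      · exact ho
    rw [if_pos i1, if_neg i2, one_mul, zero_mul, add_zero,
      show (2*u)/2 = u by omega, show (2*u+1)/2 = u by omega]
  rw [Finset.sum_congr rfl congr1]
  rfl

lemma zpow_pred (m : ℕ) (h : 1 ≤ m) : (2:ℤ)^m = 2 * 2^(m-1) := by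
  obtain ⟨M, rfl⟩ : ∃ M, m = M+1 := ⟨m-1, by omega⟩
  simp [pow_succ]
  ring


/-- For `n ≥ 2`, the number of rational knots with crossing number `n`,
`RK(n) = (1/3)(2^(n-2) + ((-1)^(n+1)+1)/2·2^((n-1)/2) + ((-1)^(n+1)-1)/2 + 1 - (-1)^(⌊n/2⌋n))`
(the term `2^((n-1)/2)` occurring only for odd `n`, where `((-1)^(n+1)+1)/2 = 1`, and
`((-1)^(n+1)-1)/2` being `-1` for even `n` and `0` for odd `n`), plus the number of
oriented rational links with crossing number `n`,
`RL(n) = (1/3)(2^(n-2) + 2(-1)^n) + ((-1)^n+1)/2·2^((n-2)/2)`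
(the term `2^((n-2)/2)` occurring only for even `n`), equals
`Σ_{s=2}^n R(n,s) + Σ_{s=2}^n RS(n,s)`. The identity is stated multiplied by `3`. -/
theorem RK_add_RL_eq_total (n : ℕ) (hn : 2 ≤ n) :
    ((2 : ℤ) ^ (n - 2) + (if Odd n then 2 ^ ((n - 1) / 2) else 0) +
        (if Odd n then 0 else -1) + 1 - (-1) ^ ((n / 2) * n)) +
      ((2 : ℤ) ^ (n - 2) + 2 * (-1) ^ n + 3 * (if Even n then 2 ^ ((n - 2) / 2) else 0)) =
    3 * ((∑ s ∈ Finset.Icc 2 n, Rcount n s) + (∑ s ∈ Finset.Icc 2 n, RScount n s)) := by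
  rcases (by omega : n = 2 ∨ n = 3 ∨ 4 ≤ n) with rfl | rfl | h4
  · decide
  · decide
  · rw [A_eq n h4]
    rcases Nat.even_or_odd n with he | ho
    · -- n even
      have hn2 : n % 2 = 0 := Nat.even_iff.1 he
      rw [B_even n h4 he]
      rw [if_neg (by simp [Nat.odd_iff, hn2]), if_neg (by simp [Nat.odd_iff, hn2]), if_pos he]
      rw [Even.neg_one_pow (Nat.even_mul.2 (Or.inr he)), Even.neg_one_pow he]
      -- closed forms
      have hA := Xs_closed (n-1)
      rw [if_neg (by
        intro h
        have := Nat.even_iff.1 h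
        omega)] at hA
      have hB1 := Xs_closed (n/2)
      have hB2 := Xs_closed (n/2-1)
      have hp1 : (2:ℤ)^(n-1) = 2 * 2^(n-2) := by
        rw [zpow_pred (n-1) (by omega), show n-1-1 = n-2 by omega]
      have hp2 : (2:ℤ)^(n/2) = 2 * 2^(n/2-1) := zpow_pred (n/2) (by omega)
      have hp3 : (n-2)/2 = n/2 - 1 := by omega
      rw [hp3]
      have hA' : 3 * ((Xs (n-1) : ℤ)) = 2^(n-1) + 1 := by
        have : (3 * Xs (n-1) + 2 : ℤ) = 2^(n-1) + 3 := by exact_mod_cast hA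
        linarith
      rcases Nat.even_or_odd (n/2) with h | h
      · rw [if_pos h] at hB1
        rw [if_neg (by
          have := Nat.even_iff.1 h
          intro h2
          have := Nat.even_iff.1 h2
          omega)] at hB2
        have hB1' : (3 * Xs (n/2) + 2 : ℤ) = 2^(n/2) + 1 := by exact_mod_cast hB1
        have hB2' : (3 * Xs (n/2-1) + 2 : ℤ) = 2^(n/2-1) + 3 := by exact_mod_cast hB2
        push_cast
        linarith
      · rw [if_neg (Nat.not_even_iff_odd.2 h)] at hB1
        rw [if_pos (by
          have := Nat.odd_iff.1 h
          exact Nat.even_iff.2 (by omega))] at hB2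
        have hB1' : (3 * Xs (n/2) + 2 : ℤ) = 2^(n/2) + 3 := by exact_mod_cast hB1
        have hB2' : (3 * Xs (n/2-1) + 2 : ℤ) = 2^(n/2-1) + 1 := by exact_mod_cast hB2
        push_cast
        linarith
    · -- n odd
      have hn2 : n % 2 = 1 := Nat.odd_iff.1 ho
      have hne : ¬ Even n := by simp [Nat.even_iff, hn2]
      rw [B_odd n h4 hne]
      rw [if_pos ho, if_pos ho, if_neg hne, Odd.neg_one_pow ho]
      have hA := Xs_closed (n-1)
      rw [if_pos (by exact Nat.even_iff.2 (by omega))] at hA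
      have hA' : 3 * ((Xs (n-1) : ℤ)) = 2^(n-1) - 1 := by
        have : (3 * Xs (n-1) + 2 : ℤ) = 2^(n-1) + 1 := by exact_mod_cast hA
        linarith
      have hp1 : (2:ℤ)^(n-1) = 2 * 2^(n-2) := by
        rw [zpow_pred (n-1) (by omega), show n-1-1 = n-2 by omega]
      have hB1 := Xs_closed (n/2)
      have hmn : (n-1)/2 = n/2 := by omega
      rw [hmn]
      rcases Nat.even_or_odd (n/2) with h | h
      · rw [if_pos h] at hB1
        rw [Even.neg_one_pow (Nat.even_mul.2 (Or.inl h))]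
        have hB' : 3 * ((Xs (n/2) : ℤ)) = 2^(n/2) - 1 := by
          have : (3 * Xs (n/2) + 2 : ℤ) = 2^(n/2) + 1 := by exact_mod_cast hB1
          linarith
        push_cast
        linarith
      · rw [if_neg (Nat.not_even_iff_odd.2 h)] at hB1
        rw [Odd.neg_one_pow (Nat.odd_mul.2 ⟨h, ho⟩)]
        have hB' : 3 * ((Xs (n/2) : ℤ)) = 2^(n/2) + 1 := by
          have : (3 * Xs (n/2) + 2 : ℤ) = 2^(n/2) + 3 := by exact_mod_cast hB1
          linarith
        push_cast
        linarith
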